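/- Let n, r be integers with 1 ≤ r ≤ n−2 and let f : [0,1] → ℝ be (r+2) times continuously differentiable. Then ‖ ((n+r−1)!(n−r)!/((n−1)! n!)) · (U_n f)^{(r)} − U_{n−r}(f^{(r)}) ‖ ≤ (1/4)·((n+1)/((n+1)² − r²))·‖f^{(r+2)}‖ + (r/(n+r))·‖f^{(r+1)}‖ + ω(f^{(r)}, r(n−2−r)/(n² − r²)). -/

import Mathlib

/-- Bernstein basis polynomial `p_{n,k}(x) = C(n,k) x^k (1-x)^{n-k}`. -/
noncomputable def bern (n k : ℕ) (x : ℝ) : ℝ :=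
  (n.choose k : ℝ) * x ^ k * (1 - x) ^ (n - k)

/-- Genuine Bernstein–Durrmeyer operator
`U_n(f;x) = (1-x)^n f(0) + x^n f(1) + (n-1) Σ_{k=1}^{n-1} p_{n,k}(x) ∫₀¹ f(t) p_{n-2,k-1}(t) dt`. -/
noncomputable def genuineBD (n : ℕ) (f : ℝ → ℝ) (x : ℝ) : ℝ :=
  (1 - x) ^ n * f 0 + x ^ n * f 1 +
    ((n : ℝ) - 1) * ∑ k ∈ Finset.Icc 1 (n - 1),
      bern n k x * ∫ t in (0:ℝ)..1, f t * bern (n - 2) (k - 1) t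

/-- Supremum norm on `[0,1]`. -/
noncomputable def supNorm (g : ℝ → ℝ) : ℝ :=
  ⨆ x : Set.Icc (0:ℝ) 1, |g x|

/-- First modulus of continuity on `[0,1]`. -/
noncomputable def modCont (g : ℝ → ℝ) (δ : ℝ) : ℝ :=
  sSup {d : ℝ | ∃ x ∈ Set.Icc (0:ℝ) 1, ∃ y ∈ Set.Icc (0:ℝ) 1, |x - y| ≤ δ ∧ d = |g x - g y|}

open intervalIntegral MeasureTheory Finset

/-- raw beta-type integral -/
noncomputable def JJ (a b : ℕ) (h : ℝ → ℝ) : ℝ :=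
  ∫ t in (0:ℝ)..1, h t * (t ^ a * (1 - t) ^ b)

lemma cont_weight (a b : ℕ) : Continuous (fun t : ℝ => t ^ a * (1 - t) ^ b) := by
  continuity

lemma JJ_integrable {h : ℝ → ℝ} (hh : Continuous h) (a b : ℕ) :
    IntervalIntegrable (fun t => h t * (t ^ a * (1 - t) ^ b)) volume 0 1 :=
  (hh.mul (cont_weight a b)).intervalIntegrable 0 1

/-- Integration by parts, general form. -/
lemma JJ_deriv {h : ℝ → ℝ} (hd : ∀ t, HasDerivAt h (deriv h t) t)
    (hc : Continuous (deriv h)) (hh : Continuous h) (a b : ℕ) :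
    JJ a b (deriv h) = h 1 * ((1:ℝ) ^ a * (0:ℝ) ^ b) - h 0 * ((0:ℝ) ^ a * (1:ℝ) ^ b)
      - (a : ℝ) * JJ (a - 1) b h + (b : ℝ) * JJ a (b - 1) h := by
  have hv : ∀ t : ℝ, HasDerivAt (fun t : ℝ => t ^ a * (1 - t) ^ b)
      ((a : ℝ) * t ^ (a - 1) * (1 - t) ^ b - (b : ℝ) * (t ^ a * (1 - t) ^ (b - 1))) t := by
    intro t
    have h1 : HasDerivAt (fun t : ℝ => t ^ a) ((a : ℝ) * t ^ (a - 1)) t := hasDerivAt_pow a t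
    have h2 : HasDerivAt (fun t : ℝ => (1 - t) ^ b) ((b : ℝ) * (1 - t) ^ (b - 1) * (-1)) t := by
      have := ((hasDerivAt_pow b (1 - t)).comp t ((hasDerivAt_const t (1:ℝ)).sub (hasDerivAt_id t)))
      simpa [Function.comp_def] using this
    have := h1.mul h2
    refine this.congr_deriv ?_
    ring
  have key := intervalIntegral.integral_mul_deriv_eq_deriv_mul
    (u := h) (v := fun t : ℝ => t ^ a * (1 - t) ^ b)
    (u' := deriv h)
    (v' := fun t => (a : ℝ) * t ^ (a - 1) * (1 - t) ^ b - (b : ℝ) * (t ^ a * (1 - t) ^ (b - 1)))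
    (fun x _ => hd x) (fun x _ => hv x)
    (hc.intervalIntegrable 0 1)
    (by apply Continuous.intervalIntegrable; continuity)
  -- key : ∫ h * v' = h 1 * v 1 - h 0 * v 0 - ∫ h' * v
  have expand : (∫ t in (0:ℝ)..1, h t * ((a : ℝ) * t ^ (a - 1) * (1 - t) ^ b
      - (b : ℝ) * (t ^ a * (1 - t) ^ (b - 1))))
      = (a : ℝ) * JJ (a - 1) b h - (b : ℝ) * JJ a (b - 1) h := by
    rw [show (fun t => h t * ((a : ℝ) * t ^ (a - 1) * (1 - t) ^ b
      - (b : ℝ) * (t ^ a * (1 - t) ^ (b - 1)))) = (fun t =>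
        (a : ℝ) * (h t * (t ^ (a-1) * (1 - t) ^ b)) - (b:ℝ) * (h t * (t ^ a * (1 - t) ^ (b-1))))
      from funext fun t => by ring]
    rw [intervalIntegral.integral_sub, intervalIntegral.integral_const_mul,
      intervalIntegral.integral_const_mul]
    · rfl
    · exact ((JJ_integrable hh (a-1) b).const_mul _)
    · exact ((JJ_integrable hh a (b-1)).const_mul _)
  rw [expand] at key
  have hJ : JJ a b (deriv h) = ∫ x in (0:ℝ)..1, deriv h x * (fun t => t ^ a * (1 - t) ^ b) x := rfl
  rw [hJ]
  have h1 : ((fun t : ℝ => t ^ a * (1 - t) ^ b) 1 : ℝ) = (1:ℝ) ^ a * (0:ℝ) ^ b := by norm_num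
  have h0 : ((fun t : ℝ => t ^ a * (1 - t) ^ b) 0 : ℝ) = (0:ℝ) ^ a * (1:ℝ) ^ b := by norm_num
  simp only [sub_self, sub_zero] at key
  linarith [key]
lemma JJ_zero_fun (a b : ℕ) : JJ a b (fun _ => (0:ℝ)) = 0 := by
  unfold JJ; simp

lemma JJ_base (b : ℕ) : JJ 0 b (fun _ => (1:ℝ)) = 1 / (b + 1) := by
  unfold JJ
  simp only [pow_zero, one_mul]
  rw [show (fun t : ℝ => (1 - t) ^ b) = (fun t : ℝ => ((1:ℝ) - t) ^ b) from rfl]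
  rw [intervalIntegral.integral_comp_sub_left (fun u : ℝ => u ^ b) 1]
  norm_num [integral_pow]

lemma fact_ne (k : ℕ) : ((k.factorial : ℝ)) ≠ 0 :=
  Nat.cast_ne_zero.mpr (Nat.factorial_ne_zero k)

lemma JJ_one (a b : ℕ) : JJ a b (fun _ => (1:ℝ)) =
    (a.factorial : ℝ) * (b.factorial : ℝ) / ((a + b + 1).factorial : ℝ) := by
  induction a generalizing b with
  | zero =>
    rw [JJ_base]
    have h1 : (((0:ℕ) + b + 1).factorial : ℝ) = ((b:ℝ) + 1) * (b.factorial : ℝ) := by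
      rw [show (0:ℕ) + b + 1 = b + 1 by omega]
      push_cast [Nat.factorial_succ]; ring
    rw [h1, Nat.factorial_zero]
    rw [div_eq_div_iff (by positivity) (by
      have := fact_ne b
      have hb : (0:ℝ) < (b:ℝ) + 1 := by positivity
      have hf : (0:ℝ) < (b.factorial : ℝ) := by
        have := Nat.factorial_pos b
        exact_mod_cast this
      positivity)]
    push_cast; ring
  | succ a ih =>
    have hd : ∀ t : ℝ, HasDerivAt (fun _ : ℝ => (1:ℝ)) (deriv (fun _ : ℝ => (1:ℝ)) t) t := by
      intro t
      simpa [deriv_const] using hasDerivAt_const t (1:ℝ)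
    have hzero : deriv (fun _ : ℝ => (1:ℝ)) = fun _ => (0:ℝ) := by
      funext t; simp
    have key := JJ_deriv hd (by rw [hzero]; continuity) continuous_const (a + 1) (b + 1)
    rw [hzero] at key
    rw [JJ_zero_fun] at key
    simp only [Nat.add_sub_cancel] at key
    rw [show ((0:ℝ) ^ (b+1)) = 0 by simp, show ((0:ℝ) ^ (a+1)) = 0 by simp] at key
    simp only [mul_zero, one_mul, zero_mul, zero_sub, sub_zero, zero_add] at key
    have hb1 : ((b:ℝ) + 1) ≠ 0 := by positivity
    have hstep : JJ (a+1) b (fun _ => (1:ℝ)) = ((a:ℝ)+1) / ((b:ℝ)+1) * JJ a (b+1) (fun _ => (1:ℝ)) := by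
      push_cast at key
      field_simp
      linarith
    have hv : JJ a (b+1) (fun _ => (1:ℝ))
        = (a.factorial : ℝ) * ((b+1).factorial : ℝ) / ((a + b + 2).factorial : ℝ) := by
      rw [ih (b+1), show a + (b+1) + 1 = a + b + 2 by omega]
    rw [show (a+1) + b + 1 = a + b + 2 by omega]
    rw [hstep, hv]
    have hfa : (((a+1)).factorial : ℝ) = ((a:ℝ)+1) * (a.factorial : ℝ) := by
      push_cast [Nat.factorial_succ]; ring
    have hfb : (((b+1)).factorial : ℝ) = ((b:ℝ)+1) * (b.factorial : ℝ) := by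
      push_cast [Nat.factorial_succ]; ring
    rw [hfa, hfb]
    have h2 := fact_ne (a+b+2)
    field_simp
lemma int_bern (M i : ℕ) (h : ℝ → ℝ) :
    (∫ t in (0:ℝ)..1, h t * bern M i t) = (M.choose i : ℝ) * JJ i (M - i) h := by
  unfold JJ
  rw [← intervalIntegral.integral_const_mul]
  congr 1
  funext t
  unfold bern
  ring

lemma choose_fact_div (M i : ℕ) (hi : i ≤ M) :
    (M.choose i : ℝ) * ((i.factorial : ℝ) * (((M - i).factorial : ℝ)) / (((i + (M-i) + 1).factorial : ℝ)))
      = 1 / ((M:ℝ) + 1) := by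
  have h1 : i + (M - i) + 1 = M + 1 := by omega
  rw [h1]
  have h2 : ((M+1).factorial : ℝ) = ((M:ℝ)+1) * (M.factorial : ℝ) := by
    push_cast [Nat.factorial_succ]; ring
  have h3 : (M.choose i : ℝ) * (i.factorial : ℝ) * ((M - i).factorial : ℝ) = (M.factorial : ℝ) := by
    exact_mod_cast congrArg (Nat.cast : ℕ → ℝ) (Nat.choose_mul_factorial_mul_factorial hi)
  rw [h2]
  have hM : ((M:ℝ) + 1) ≠ 0 := by positivity
  have hMf := fact_ne M
  field_simp
  linear_combination h3

lemma int_bern_one (M i : ℕ) (hi : i ≤ M) :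
    (∫ t in (0:ℝ)..1, bern M i t) = 1 / ((M:ℝ) + 1) := by
  have := int_bern M i (fun _ => (1:ℝ))
  simp only [one_mul] at this
  rw [this, JJ_one]
  exact choose_fact_div M i hi

lemma bern_nonneg {x : ℝ} (hx : x ∈ Set.Icc (0:ℝ) 1) (M i : ℕ) : 0 ≤ bern M i x := by
  obtain ⟨h0, h1⟩ := hx
  unfold bern
  have : (0:ℝ) ≤ 1 - x := by linarith
  positivity

lemma bern_sum (M : ℕ) (x : ℝ) : ∑ k ∈ Finset.range (M+1), bern M k x = 1 := by
  calc ∑ k ∈ Finset.range (M+1), bern M k x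
      = ∑ k ∈ Finset.range (M+1), x ^ k * (1-x) ^ (M-k) * (M.choose k : ℝ) :=
        Finset.sum_congr rfl (fun k _ => by unfold bern; ring)
    _ = (x + (1-x))^M := (add_pow x (1-x) M).symm
    _ = 1 := by norm_num

/-- the Beta(i, N-i) family of functionals (normalized), with endpoints as point evaluations -/
noncomputable def betaF (N : ℕ) (g : ℝ → ℝ) (i : ℕ) : ℝ :=
  if i = 0 then g 0 else if i = N then g 1
  else ((N:ℝ) - 1) * (((N-2).choose (i-1) : ℕ) : ℝ) * JJ (i-1) (N-i-1) g

lemma beta_step (N : ℕ) (hN : 2 ≤ N) (g : ℝ → ℝ)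
    (hd : ∀ t, HasDerivAt g (deriv g t) t) (hg : Continuous g) (hg' : Continuous (deriv g))
    (i : ℕ) (hi : i < N) :
    betaF N g (i+1) - betaF N g i = ((N-1).choose i : ℝ) * JJ i (N-1-i) (deriv g) := by
  have key := JJ_deriv hd hg' hg i (N-1-i)
  rcases Nat.eq_zero_or_pos i with h0 | hpos
  · subst h0
    have hb : (N - 1 - 0) = N - 1 := by omega
    rw [hb] at key ⊢
    have hNz : (0:ℝ) ^ (N-1) = 0 := by
      apply zero_pow; omega
    rw [show ((1:ℝ)^0 * (0:ℝ)^(N-1)) = 0 by rw [hNz]; ring] at key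
    simp only [pow_zero, one_pow, one_mul, mul_zero, zero_mul, Nat.cast_zero, zero_sub,
      Nat.zero_sub, mul_one] at key
    have h1neN : (1:ℕ) ≠ N := by omega
    have hb0 : betaF N g 0 = g 0 := by unfold betaF; simp
    have hb1 : betaF N g (0+1) = ((N:ℝ) - 1) * (((N-2).choose (1-1) : ℕ):ℝ) * JJ (1-1) (N-1-1) g := by
      unfold betaF
      norm_num [h1neN]
    rw [hb0, hb1]
    rw [show (1-1 : ℕ) = 0 by rfl, show (N:ℕ) - 1 - 1 = N - 2 by omega, Nat.choose_zero_right,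
      Nat.choose_zero_right, Nat.cast_one]
    have hc1 : (((N-1:ℕ)):ℝ) = (N:ℝ) - 1 := by
      have : (1:ℕ) ≤ N := by omega
      push_cast [Nat.cast_sub this]; ring
    rw [hc1] at key
    rw [show (N - 1 - 1 : ℕ) = N - 2 by omega] at key
    linarith [key]
  · rcases Nat.lt_or_ge i (N-1) with hmid | hlast
    · -- middle case : 1 ≤ i ≤ N-2
      have hb1 : N - 1 - i = (N - 1 - i - 1) + 1 := by omega
      have hz1 : ((0:ℝ))^(N-1-i) = 0 := by apply zero_pow; omega
      have hz2 : ((0:ℝ))^i = 0 := by apply zero_pow; omega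
      rw [show ((1:ℝ)^i * (0:ℝ)^(N-1-i)) = 0 by rw [hz1]; ring,
        show ((0:ℝ)^i * (1:ℝ)^(N-1-i)) = 0 by rw [hz2]; ring] at key
      simp only [mul_zero, zero_sub, zero_mul] at key
      -- key : JJ i (N-1-i) g' = - (i * JJ (i-1) (N-1-i) g) + (N-1-i) * JJ i (N-1-i-1) g
      unfold betaF
      have e1 : i + 1 ≠ 0 := by omega
      have e2 : i + 1 ≠ N := by omega
      have e3 : i ≠ 0 := by omega
      have e4 : i ≠ N := by omega
      simp only [if_neg e1, if_neg e2, if_neg e3, if_neg e4]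
      rw [show (i + 1 - 1 : ℕ) = i by omega]
      rw [show (N - (i+1) - 1 : ℕ) = N - i - 2 by omega]
      rw [show (N - i - 1 : ℕ) = N - i - 1 by rfl]
      -- identities
      have id1 : ((N-1).choose i : ℝ) * (i : ℝ) = ((N:ℝ) - 1) * ((N-2).choose (i-1) : ℝ) := by
        have := Nat.add_one_mul_choose_eq (N-2) (i-1)
        have hN2 : N - 2 + 1 = N - 1 := by omega
        have hi1 : i - 1 + 1 = i := by omega
        rw [hN2, hi1] at this
        have := congrArg (Nat.cast : ℕ → ℝ) this
        push_cast at this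
        have hc : (((N-1:ℕ)):ℝ) = (N:ℝ) - 1 := by
          have : (1:ℕ) ≤ N := by omega
          push_cast [Nat.cast_sub this]; ring
        rw [hc] at this
        linarith [this]
      have id2 : ((N-1).choose i : ℝ) * (((N-1-i:ℕ)) : ℝ) = ((N:ℝ) - 1) * ((N-2).choose i : ℝ) := by
        have ha := Nat.choose_succ_right_eq (N-1) i
        have hb := Nat.add_one_mul_choose_eq (N-2) i
        have hN2 : N - 2 + 1 = N - 1 := by omega
        rw [hN2] at hb
        -- ha : C(N-1, i+1) * (i+1) = C(N-1, i) * (N-1-i)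
        -- hb : (N-1) * C(N-2, i) = C(N-1, i+1) * (i+1)
        have := ha.symm.trans hb.symm
        have := congrArg (Nat.cast : ℕ → ℝ) this
        push_cast at this
        have hc : (((N-1:ℕ)):ℝ) = (N:ℝ) - 1 := by
          have : (1:ℕ) ≤ N := by omega
          push_cast [Nat.cast_sub this]; ring
        rw [hc] at this
        -- this : C(N-1,i) * (N-1-i) = (N-1) * C(N-2,i)   (casts)
        exact_mod_cast this
      have expand : ((N-1).choose i : ℝ) * JJ i (N-1-i) (deriv g)
          = - (((N-1).choose i : ℝ) * (i:ℝ) * JJ (i-1) (N-1-i) g)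
            + ((N-1).choose i : ℝ) * (((N-1-i:ℕ)):ℝ) * JJ i (N-1-i-1) g := by
        rw [key]
        push_cast
        ring
      rw [expand, id1, id2]
      rw [show (N-1-i-1 : ℕ) = N - i - 2 by omega, show (N-1-i : ℕ) = N - i - 1 by omega]
      ring
    · -- last case : i = N-1
      have hieq : i = N - 1 := by omega
      subst hieq
      rw [show (N - 1 - (N-1) : ℕ) = 0 by omega] at key ⊢
      have hz2 : ((0:ℝ))^(N-1) = 0 := by apply zero_pow; omega
      rw [show ((0:ℝ)^(N-1) * (1:ℝ)^0) = 0 by rw [hz2]; ring] at key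
      simp only [pow_zero, mul_one, one_pow, mul_zero, Nat.cast_zero, zero_mul, add_zero,
        sub_zero, Nat.sub_zero] at key
      -- key : JJ (N-1) 0 g' = g 1 - (N-1) * JJ (N-2) 0 g
      unfold betaF
      have e1 : N - 1 + 1 = N := by omega
      have e3 : N - 1 ≠ 0 := by omega
      have e4 : N - 1 ≠ N := by omega
      rw [e1]
      simp only [if_neg e3, if_neg e4, if_pos rfl, if_neg (by omega : N ≠ 0)]
      rw [Nat.choose_self, show (N - 1 - 1 : ℕ) = N - 2 by omega,
        show (N - (N-1) - 1 : ℕ) = 0 by omega, Nat.choose_self]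
      have hc : (((N-1:ℕ)):ℝ) = (N:ℝ) - 1 := by
        have : (1:ℕ) ≤ N := by omega
        push_cast [Nat.cast_sub this]; ring
      rw [hc] at key
      rw [show (N - 1 - 1 : ℕ) = N - 2 by omega] at key
      push_cast
      linarith [key]
lemma JJ_abs_bound {h : ℝ → ℝ} (hh : Continuous h) (G : ℝ)
    (hG : ∀ t ∈ Set.Icc (0:ℝ) 1, |h t| ≤ G) (a b : ℕ) :
    |JJ a b h| ≤ G * JJ a b (fun _ => (1:ℝ)) := by
  unfold JJ
  have h1 : |∫ t in (0:ℝ)..1, h t * (t ^ a * (1 - t) ^ b)|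
      ≤ ∫ t in (0:ℝ)..1, |h t * (t ^ a * (1 - t) ^ b)| :=
    intervalIntegral.abs_integral_le_integral_abs zero_le_one
  have h2 : (∫ t in (0:ℝ)..1, |h t * (t ^ a * (1 - t) ^ b)|)
      ≤ ∫ t in (0:ℝ)..1, G * (t ^ a * (1 - t) ^ b) := by
    apply intervalIntegral.integral_mono_on zero_le_one
    · exact ((hh.mul (cont_weight a b)).abs).intervalIntegrable 0 1
    · exact ((continuous_const.mul (cont_weight a b))).intervalIntegrable 0 1
    · intro t ht
      have hw : 0 ≤ t ^ a * (1 - t) ^ b := by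
        obtain ⟨ht0, ht1⟩ := ht
        have : (0:ℝ) ≤ 1 - t := by linarith
        positivity
      rw [abs_mul, abs_of_nonneg hw]
      exact mul_le_mul_of_nonneg_right (hG t ht) hw
  have h3 : (∫ t in (0:ℝ)..1, G * (t ^ a * (1 - t) ^ b))
      = G * ∫ t in (0:ℝ)..1, (fun _ => (1:ℝ)) t * (t ^ a * (1 - t) ^ b) := by
    rw [← intervalIntegral.integral_const_mul]
    congr 1; funext t; ring
  calc |∫ t in (0:ℝ)..1, h t * (t ^ a * (1 - t) ^ b)|
      ≤ ∫ t in (0:ℝ)..1, |h t * (t ^ a * (1 - t) ^ b)| := h1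
    _ ≤ ∫ t in (0:ℝ)..1, G * (t ^ a * (1 - t) ^ b) := h2
    _ = G * ∫ t in (0:ℝ)..1, (fun _ => (1:ℝ)) t * (t ^ a * (1 - t) ^ b) := h3

lemma step_bound (N : ℕ) (hN : 2 ≤ N) {g : ℝ → ℝ} (hg' : Continuous (deriv g))
    (G : ℝ) (hG : ∀ t ∈ Set.Icc (0:ℝ) 1, |deriv g t| ≤ G) (i : ℕ) (hi : i < N) :
    |((N-1).choose i : ℝ) * JJ i (N-1-i) (deriv g)| ≤ G / N := by
  have hC : (0:ℝ) ≤ ((N-1).choose i : ℝ) := Nat.cast_nonneg _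
  have hb := JJ_abs_bound hg' G hG i (N-1-i)
  rw [abs_mul, abs_of_nonneg hC]
  have h2 : ((N-1).choose i : ℝ) * |JJ i (N-1-i) (deriv g)|
      ≤ ((N-1).choose i : ℝ) * (G * JJ i (N-1-i) (fun _ => (1:ℝ))) :=
    mul_le_mul_of_nonneg_left hb hC
  have h3 : ((N-1).choose i : ℝ) * (G * JJ i (N-1-i) (fun _ => (1:ℝ))) = G / N := by
    rw [JJ_one]
    have hiN : i ≤ N - 1 := by omega
    have := choose_fact_div (N-1) i hiN
    have hc : (((N-1:ℕ)):ℝ) = (N:ℝ) - 1 := by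
      have : (1:ℕ) ≤ N := by omega
      push_cast [Nat.cast_sub this]; ring
    rw [hc] at this
    have hN0 : (N:ℝ) ≠ 0 := by
      have : 0 < N := by omega
      positivity
    rw [show ((N:ℝ) - 1) + 1 = (N:ℝ) by ring] at this
    calc ((N-1).choose i : ℝ) * (G * ((i.factorial : ℝ) * (((N-1-i).factorial : ℝ)) / ((i + (N-1-i) + 1).factorial : ℝ)))
        = G * (((N-1).choose i : ℝ) * ((i.factorial : ℝ) * (((N-1-i).factorial : ℝ)) / ((i + (N-1-i) + 1).factorial : ℝ))) := by ring
      _ = G * (1 / (N:ℝ)) := by rw [this]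
      _ = G / N := by ring
  linarith

lemma beta_telescope (N : ℕ) (hN : 2 ≤ N) {g : ℝ → ℝ}
    (hd : ∀ t, HasDerivAt g (deriv g t) t) (hg : Continuous g) (hg' : Continuous (deriv g))
    (G : ℝ) (hG : ∀ t ∈ Set.Icc (0:ℝ) 1, |deriv g t| ≤ G) :
    ∀ d a, a + d ≤ N → |betaF N g (a + d) - betaF N g a| ≤ (d : ℝ) * G / N := by
  intro d
  induction d with
  | zero => intro a ha; simp
  | succ d ih =>
    intro a ha
    have h1 := ih a (by omega)
    have h2 : betaF N g (a + (d+1)) - betaF N g (a + d)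
        = ((N-1).choose (a+d) : ℝ) * JJ (a+d) (N-1-(a+d)) (deriv g) := by
      have := beta_step N hN g hd hg hg' (a+d) (by omega)
      rw [show a + (d+1) = (a+d) + 1 by omega]
      exact this
    have h3 := step_bound N hN hg' G hG (a+d) (by omega)
    rw [← h2] at h3
    have : |betaF N g (a + (d+1)) - betaF N g a|
        ≤ |betaF N g (a + (d+1)) - betaF N g (a+d)| + |betaF N g (a+d) - betaF N g a| := by
      have := abs_sub_le (betaF N g (a + (d+1))) (betaF N g (a+d)) (betaF N g a)
      exact this
    have hGnn : 0 ≤ G := le_trans (abs_nonneg _) (hG 0 (by norm_num))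
    have hNpos : (0:ℝ) < N := by
      have : 0 < N := by omega
      exact_mod_cast this
    calc |betaF N g (a + (d+1)) - betaF N g a|
        ≤ |betaF N g (a + (d+1)) - betaF N g (a+d)| + |betaF N g (a+d) - betaF N g a| := this
      _ ≤ G / N + (d : ℝ) * G / N := add_le_add h3 h1
      _ = ((d:ℝ) + 1) * G / N := by ring
      _ = (((d+1):ℕ) : ℝ) * G / N := by push_cast; ring
lemma JJ_expand (R a b : ℕ) {g : ℝ → ℝ} (hg : Continuous g) :
    JJ a b g = ∑ j ∈ Finset.range (R+1), (R.choose j : ℝ) * JJ (a+j) (b + R - j) g := by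
  unfold JJ
  have key : ∀ t : ℝ, g t * (t ^ a * (1-t) ^ b) * ((t + (1-t))^R)
      = ∑ j ∈ Finset.range (R+1), (R.choose j : ℝ) * (g t * (t ^ (a+j) * (1-t) ^ (b + R - j))) := by
    intro t
    rw [add_pow t (1-t) R, Finset.mul_sum]
    apply Finset.sum_congr rfl
    intro j hj
    have hjR : j ≤ R := by
      have := Finset.mem_range.mp hj; omega
    rw [pow_add, show b + R - j = b + (R - j) by omega, pow_add]
    ring
  have lhs_eq : ∀ t : ℝ, g t * (t ^ a * (1-t) ^ b)
      = g t * (t ^ a * (1-t) ^ b) * ((t + (1-t))^R) := by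
    intro t; rw [show t + (1-t) = (1:ℝ) by ring]; simp
  calc (∫ t in (0:ℝ)..1, g t * (t ^ a * (1 - t) ^ b))
      = ∫ t in (0:ℝ)..1, ∑ j ∈ Finset.range (R+1),
          (R.choose j : ℝ) * (g t * (t ^ (a+j) * (1-t) ^ (b + R - j))) := by
        congr 1; funext t; rw [lhs_eq t, key t]
    _ = ∑ j ∈ Finset.range (R+1), ∫ t in (0:ℝ)..1,
          (R.choose j : ℝ) * (g t * (t ^ (a+j) * (1-t) ^ (b + R - j))) := by
        apply intervalIntegral.integral_finset_sum
        intro j _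
        exact ((JJ_integrable hg (a+j) (b + R - j)).const_mul _)
    _ = ∑ j ∈ Finset.range (R+1), (R.choose j : ℝ) * JJ (a+j) (b + R - j) g := by
        apply Finset.sum_congr rfl
        intro j _
        rw [intervalIntegral.integral_const_mul]
        rfl

lemma betaF_one (M i : ℕ) (hM : 2 ≤ M) (hi1 : 1 ≤ i) (hi2 : i ≤ M - 1) :
    betaF M (fun _ => (1:ℝ)) i = 1 := by
  unfold betaF
  rw [if_neg (by omega), if_neg (by omega), JJ_one]
  have h := choose_fact_div (M-2) (i-1) (by omega)
  rw [show (M - 2 - (i-1) : ℕ) = M - i - 1 by omega] at h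
  have hc : (((M-2:ℕ)):ℝ) = (M:ℝ) - 2 := by
    push_cast [Nat.cast_sub hM]; ring
  rw [hc] at h
  have hM1 : ((M:ℝ) - 1) ≠ 0 := by
    have : (2:ℕ) ≤ M := hM
    have : (2:ℝ) ≤ (M:ℝ) := by exact_mod_cast this
    intro hc2; linarith
  calc ((M:ℝ) - 1) * (((M-2).choose (i-1) : ℕ) : ℝ)
        * ((((i-1).factorial : ℝ)) * (((M-i-1).factorial : ℝ)) / ((((i-1) + (M-i-1) + 1).factorial : ℝ)))
      = ((M:ℝ) - 1) * ((((M-2).choose (i-1) : ℕ) : ℝ)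
        * ((((i-1).factorial : ℝ)) * (((M-i-1).factorial : ℝ)) / ((((i-1) + (M-i-1) + 1).factorial : ℝ)))) := by ring
    _ = ((M:ℝ) - 1) * (1 / (((M:ℝ) - 2) + 1)) := by rw [h]
    _ = 1 := by
        rw [show ((M:ℝ) - 2) + 1 = (M:ℝ) - 1 by ring]
        field_simp
lemma mixture (m r : ℕ) (hm : 2 ≤ m) (hr : 1 ≤ r) (k : ℕ) (hk1 : 1 ≤ k) (hk2 : k ≤ m - 1) :
    ∃ lam : ℕ → ℝ, (∀ j, 0 ≤ lam j) ∧
      (∀ (g : ℝ → ℝ), Continuous g →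
        betaF m g k = ∑ j ∈ Finset.range (2*r+1), lam j * betaF (m + 2*r) g (k+j)) ∧
      (∑ j ∈ Finset.range (2*r+1), lam j = 1) := by
  set N := m + 2*r with hN
  have hden : ∀ j, j ≤ 2*r → (0:ℝ) < ((N:ℝ) - 1) * (((N-2).choose (k+j-1) : ℕ) : ℝ) := by
    intro j hj
    have h1 : (0:ℝ) < (N:ℝ) - 1 := by
      have : (2:ℕ) ≤ N := by omega
      have : (2:ℝ) ≤ (N:ℝ) := by exact_mod_cast this
      linarith
    have h2 : 0 < (N-2).choose (k+j-1) := Nat.choose_pos (by omega)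
    have h2' : (0:ℝ) < (((N-2).choose (k+j-1) : ℕ) : ℝ) := by exact_mod_cast h2
    positivity
  refine ⟨fun j => if j ≤ 2*r then
      ((m:ℝ) - 1) * (((m-2).choose (k-1) : ℕ) : ℝ) * (((2*r).choose j : ℕ) : ℝ)
        / (((N:ℝ) - 1) * (((N-2).choose (k+j-1) : ℕ) : ℝ)) else 0, ?_, ?_, ?_⟩
  · intro j
    dsimp only
    by_cases hj : j ≤ 2*r
    · rw [if_pos hj]
      have hd := hden j hj
      have hm1 : (0:ℝ) ≤ (m:ℝ) - 1 := by
        have : (1:ℕ) ≤ m := by omega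
        have : (1:ℝ) ≤ (m:ℝ) := by exact_mod_cast this
        linarith
      positivity
    · rw [if_neg hj]
  · intro g hg
    have hmain : betaF m g k = ((m:ℝ) - 1) * (((m-2).choose (k-1) : ℕ) : ℝ)
        * ∑ j ∈ Finset.range (2*r+1), (((2*r).choose j : ℕ) : ℝ) * JJ (k-1+j) (m-k-1 + 2*r - j) g := by
      unfold betaF
      rw [if_neg (by omega), if_neg (by omega)]
      rw [JJ_expand (2*r) (k-1) (m-k-1) hg]
    rw [hmain, Finset.mul_sum]
    apply Finset.sum_congr rfl
    intro j hj
    have hjr : j ≤ 2*r := by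
      have := Finset.mem_range.mp hj; omega
    dsimp only
    rw [if_pos hjr]
    have hbN : betaF N g (k+j) = ((N:ℝ) - 1) * (((N-2).choose (k+j-1) : ℕ) : ℝ)
        * JJ (k+j-1) (N-(k+j)-1) g := by
      unfold betaF
      rw [if_neg (by omega), if_neg (by omega)]
    rw [hbN]
    have hidx1 : k - 1 + j = k + j - 1 := by omega
    have hidx2 : m - k - 1 + 2*r - j = N - (k+j) - 1 := by omega
    rw [hidx1, hidx2]
    have hd := hden j hjr
    field_simp
    rw [eq_div_iff hd.ne']
    ring
  · have h1 := betaF_one m k hm hk1 hk2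
    have hgc : Continuous (fun _ : ℝ => (1:ℝ)) := continuous_const
    -- reuse previous item
    have key : betaF m (fun _ => (1:ℝ)) k = ∑ j ∈ Finset.range (2*r+1),
        (if j ≤ 2*r then ((m:ℝ) - 1) * (((m-2).choose (k-1) : ℕ) : ℝ) * (((2*r).choose j : ℕ) : ℝ)
        / (((N:ℝ) - 1) * (((N-2).choose (k+j-1) : ℕ) : ℝ)) else 0) * betaF N (fun _ => (1:ℝ)) (k+j) := by
      have hmain : betaF m (fun _ => (1:ℝ)) k = ((m:ℝ) - 1) * (((m-2).choose (k-1) : ℕ) : ℝ)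
          * ∑ j ∈ Finset.range (2*r+1), (((2*r).choose j : ℕ) : ℝ) * JJ (k-1+j) (m-k-1 + 2*r - j) (fun _ => (1:ℝ)) := by
        unfold betaF
        rw [if_neg (by omega), if_neg (by omega)]
        rw [JJ_expand (2*r) (k-1) (m-k-1) hgc]
      rw [hmain, Finset.mul_sum]
      apply Finset.sum_congr rfl
      intro j hj
      have hjr : j ≤ 2*r := by
        have := Finset.mem_range.mp hj; omega
      rw [if_pos hjr]
      have hbN : betaF N (fun _ => (1:ℝ)) (k+j) = ((N:ℝ) - 1) * (((N-2).choose (k+j-1) : ℕ) : ℝ)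
          * JJ (k+j-1) (N-(k+j)-1) (fun _ => (1:ℝ)) := by
        unfold betaF
        rw [if_neg (by omega), if_neg (by omega)]
      rw [hbN]
      have hidx1 : k - 1 + j = k + j - 1 := by omega
      have hidx2 : m - k - 1 + 2*r - j = N - (k+j) - 1 := by omega
      rw [hidx1, hidx2]
      have hd := hden j hjr
      field_simp
      rw [eq_div_iff hd.ne']
      ring
    calc ∑ j ∈ Finset.range (2*r+1), (fun j => if j ≤ 2*r then
          ((m:ℝ) - 1) * (((m-2).choose (k-1) : ℕ) : ℝ) * (((2*r).choose j : ℕ) : ℝ)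
            / (((N:ℝ) - 1) * (((N-2).choose (k+j-1) : ℕ) : ℝ)) else 0) j
        = ∑ j ∈ Finset.range (2*r+1),
          (if j ≤ 2*r then ((m:ℝ) - 1) * (((m-2).choose (k-1) : ℕ) : ℝ) * (((2*r).choose j : ℕ) : ℝ)
          / (((N:ℝ) - 1) * (((N-2).choose (k+j-1) : ℕ) : ℝ)) else 0) * betaF N (fun _ => (1:ℝ)) (k+j) := by
          apply Finset.sum_congr rfl
          intro j hj
          have hjr : j ≤ 2*r := by
            have := Finset.mem_range.mp hj; omega
          have hone : betaF N (fun _ => (1:ℝ)) (k+j) = 1 :=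
            betaF_one N (k+j) (by omega) (by omega) (by omega)
          dsimp only
          rw [hone, mul_one]
      _ = 1 := key.symm.trans h1
lemma coef_bound (m r : ℕ) (hm : 2 ≤ m) (hr : 1 ≤ r) {g : ℝ → ℝ}
    (hd : ∀ t, HasDerivAt g (deriv g t) t) (hg : Continuous g) (hg' : Continuous (deriv g))
    (G : ℝ) (hG : ∀ t ∈ Set.Icc (0:ℝ) 1, |deriv g t| ≤ G)
    (k : ℕ) (hk : k ≤ m) :
    |betaF (m + 2*r) g (r+k) - betaF m g k| ≤ (r:ℝ) * G / (m + 2*r) := by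
  set N := m + 2*r with hNdef
  have hN2 : 2 ≤ N := by omega
  have tel := beta_telescope N hN2 hd hg hg' G hG
  have hGnn : 0 ≤ G := le_trans (abs_nonneg _) (hG 0 (by norm_num))
  have hNpos : (0:ℝ) < (N:ℝ) := by
    have : 0 < N := by omega
    exact_mod_cast this
  have hgoalcast : (m:ℝ) + 2*(r:ℝ) = (N:ℝ) := by rw [hNdef]; push_cast; ring
  rw [show ((m:ℝ) + 2*(r:ℝ)) = (N:ℝ) from hgoalcast]
  rcases Nat.eq_zero_or_pos k with hk0 | hkpos
  · subst hk0
    have h0 : betaF m g 0 = g 0 := by unfold betaF; simp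
    have h0' : betaF N g 0 = g 0 := by unfold betaF; simp
    have := tel r 0 (by omega)
    rw [show (0 + r : ℕ) = r + 0 by omega] at this
    rw [h0, ← h0']
    exact this
  · rcases Nat.lt_or_ge k m with hkm | hkm'
    · -- interior 1 ≤ k ≤ m-1
      obtain ⟨lam, hlam0, hlamid, hlam1⟩ := mixture m r hm hr k hkpos (by omega)
      rw [hlamid g hg]
      have hdiff : betaF N g (r+k) - ∑ j ∈ Finset.range (2*r+1), lam j * betaF N g (k+j)
          = ∑ j ∈ Finset.range (2*r+1), lam j * (betaF N g (r+k) - betaF N g (k+j)) := by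
        calc betaF N g (r+k) - ∑ j ∈ Finset.range (2*r+1), lam j * betaF N g (k+j)
            = (∑ j ∈ Finset.range (2*r+1), lam j * betaF N g (r+k))
              - ∑ j ∈ Finset.range (2*r+1), lam j * betaF N g (k+j) := by
              rw [← Finset.sum_mul, hlam1, one_mul]
          _ = ∑ j ∈ Finset.range (2*r+1), (lam j * betaF N g (r+k) - lam j * betaF N g (k+j)) :=
              (Finset.sum_sub_distrib _ _).symm
          _ = ∑ j ∈ Finset.range (2*r+1), lam j * (betaF N g (r+k) - betaF N g (k+j)) := by
              apply Finset.sum_congr rfl; intro j _; ring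
      rw [hdiff]
      have hmono : ∀ d : ℕ, d ≤ r → (d:ℝ) * G / (N:ℝ) ≤ (r:ℝ) * G / (N:ℝ) := by
        intro d hdr
        have hdc : (d:ℝ) ≤ (r:ℝ) := by exact_mod_cast hdr
        have h2 : (d:ℝ) * G ≤ (r:ℝ) * G := mul_le_mul_of_nonneg_right hdc hGnn
        gcongr
      have habs : |∑ j ∈ Finset.range (2*r+1), lam j * (betaF N g (r+k) - betaF N g (k+j))|
          ≤ ∑ j ∈ Finset.range (2*r+1), lam j * ((r:ℝ) * G / (N:ℝ)) := by
        refine le_trans (Finset.abs_sum_le_sum_abs _ _) ?_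
        apply Finset.sum_le_sum
        intro j hj
        have hjr : j ≤ 2*r := by
          have := Finset.mem_range.mp hj; omega
        rw [abs_mul, abs_of_nonneg (hlam0 j)]
        apply mul_le_mul_of_nonneg_left _ (hlam0 j)
        rcases le_or_gt j r with hjle | hjgt
        · have h := tel (r - j) (k + j) (by omega)
          rw [show (k + j + (r - j) : ℕ) = r + k by omega] at h
          exact le_trans h (hmono (r-j) (by omega))
        · have h := tel (j - r) (r + k) (by omega)
          rw [show (r + k + (j - r) : ℕ) = k + j by omega] at h
          rw [abs_sub_comm] at h
          exact le_trans h (hmono (j-r) (by omega))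
      refine le_trans habs ?_
      rw [← Finset.sum_mul, hlam1, one_mul]
    · -- k = m
      have hkm : k = m := by omega
      rw [hkm]
      have h1 : betaF m g m = g 1 := by
        unfold betaF; rw [if_neg (by omega), if_pos rfl]
      have h1' : betaF N g N = g 1 := by
        unfold betaF; rw [if_neg (by omega), if_pos rfl]
      have hh := tel r (r + m) (by omega)
      rw [show (r + m + r : ℕ) = N by omega] at hh
      have habs : |betaF N g N - betaF N g (r+m)| = |betaF N g (r+m) - betaF N g N| := abs_sub_comm _ _
      rw [h1, ← h1']
      rw [show betaF N g (r + m) - betaF N g N = -(betaF N g N - betaF N g (r+m)) by ring, abs_neg]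
      exact hh
lemma hasDerivAt_bern (M k : ℕ) (x : ℝ) :
    HasDerivAt (fun y => bern M k y)
      ((M.choose k : ℝ) * ((k:ℝ) * x^(k-1) * (1-x)^(M-k) - (((M-k:ℕ)):ℝ) * x^k * (1-x)^(M-k-1))) x := by
  have h1 : HasDerivAt (fun y : ℝ => y ^ k) ((k : ℝ) * x ^ (k - 1)) x := hasDerivAt_pow k x
  have h2 : HasDerivAt (fun y : ℝ => (1 - y) ^ (M-k)) ((((M-k:ℕ)):ℝ) * (1 - x) ^ (M-k-1) * (-1)) x := by
    have := ((hasDerivAt_pow (M-k) (1 - x)).comp x ((hasDerivAt_const x (1:ℝ)).sub (hasDerivAt_id x)))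
    simpa [Function.comp_def] using this
  have h3 := (h1.mul h2).const_mul ((M.choose k : ℝ))
  have : (fun y => bern M k y) = fun y : ℝ => (M.choose k : ℝ) * (y ^ k * (1 - y)^(M-k)) := by
    funext y; unfold bern; ring
  rw [this]
  refine h3.congr_deriv ?_
  ring

lemma sum_deriv (M' : ℕ) (a : ℕ → ℝ) (x : ℝ) :
    HasDerivAt (fun y => ∑ k ∈ Finset.range (M'+2), bern (M'+1) k y * a k)
      ((((M'+1):ℕ):ℝ) * ∑ k ∈ Finset.range (M'+1), bern M' k x * (a (k+1) - a k)) x := by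
  have hterm : ∀ k ∈ Finset.range (M'+2), HasDerivAt (fun y => bern (M'+1) k y * a k)
      (((M'+1).choose k : ℝ) * ((k:ℝ) * x^(k-1) * (1-x)^(M'+1-k)
        - (((M'+1-k:ℕ)):ℝ) * x^k * (1-x)^(M'+1-k-1)) * a k) x := by
    intro k _
    exact (hasDerivAt_bern (M'+1) k x).mul_const (a k)
  have hsum := HasDerivAt.fun_sum hterm
  refine hsum.congr_deriv (Eq.symm ?_)
  -- algebraic identity on the derivative values
  have expand : ∀ k, ((M'+1).choose k : ℝ) * ((k:ℝ) * x^(k-1) * (1-x)^(M'+1-k)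
        - (((M'+1-k:ℕ)):ℝ) * x^k * (1-x)^(M'+1-k-1)) * a k
      = ((M'+1).choose k : ℝ) * (k:ℝ) * x^(k-1) * (1-x)^(M'+1-k) * a k
        - ((M'+1).choose k : ℝ) * (((M'+1-k:ℕ)):ℝ) * x^k * (1-x)^(M'+1-k-1) * a k := by
    intro k; ring
  rw [Finset.sum_congr rfl (fun k _ => expand k), Finset.sum_sub_distrib]
  have hA : ∑ k ∈ Finset.range (M'+2), ((M'+1).choose k : ℝ) * (k:ℝ) * x^(k-1) * (1-x)^(M'+1-k) * a k
      = (((M'+1):ℕ):ℝ) * ∑ k ∈ Finset.range (M'+1), bern M' k x * a (k+1) := by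
    rw [Finset.sum_range_succ']
    simp only [Nat.cast_zero, mul_zero, zero_mul, add_zero]
    rw [Finset.mul_sum]
    apply Finset.sum_congr rfl
    intro k _
    have hch : (((M'+1).choose (k+1) : ℕ) : ℝ) * (((k+1):ℕ):ℝ) = (((M'+1):ℕ):ℝ) * ((M'.choose k : ℕ) : ℝ) := by
      have h0 := Nat.add_one_mul_choose_eq M' k
      exact_mod_cast congrArg (Nat.cast : ℕ → ℝ) h0.symm
    have he1 : (k + 1 - 1 : ℕ) = k := by omega
    have he2 : (M' + 1 - (k+1) : ℕ) = M' - k := by omega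
    rw [he1, he2]
    unfold bern
    push_cast at hch
    push_cast
    linear_combination (x^k * (1-x)^(M'-k) * a (k+1)) * hch
  have hB : ∑ k ∈ Finset.range (M'+2), ((M'+1).choose k : ℝ) * (((M'+1-k:ℕ)):ℝ) * x^k * (1-x)^(M'+1-k-1) * a k
      = (((M'+1):ℕ):ℝ) * ∑ k ∈ Finset.range (M'+1), bern M' k x * a k := by
    rw [Finset.sum_range_succ]
    rw [show (M' + 1 - (M'+1) : ℕ) = 0 by omega]
    simp only [Nat.cast_zero, mul_zero, zero_mul, add_zero]
    rw [Finset.mul_sum]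
    apply Finset.sum_congr rfl
    intro k hk
    have hkM : k ≤ M' := by
      have := Finset.mem_range.mp hk; omega
    have hch : (((M'+1).choose k : ℕ) : ℝ) * (((M'+1-k:ℕ)):ℝ) = (((M'+1):ℕ):ℝ) * ((M'.choose k : ℕ) : ℝ) := by
      have ha := Nat.choose_succ_right_eq (M'+1) k
      have hb := Nat.add_one_mul_choose_eq M' k
      have hcomb : (M'+1).choose k * (M'+1-k) = (M'+1) * M'.choose k := by
        rw [← ha, ← hb]
      exact_mod_cast congrArg (Nat.cast : ℕ → ℝ) hcomb
    have he2 : (M' + 1 - k - 1 : ℕ) = M' - k := by omega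
    rw [he2]
    unfold bern
    linear_combination (x^k * (1-x)^(M'-k) * a k) * hch
  rw [hA, hB]
  rw [← mul_sub, ← Finset.sum_sub_distrib]
  congr 1
  apply Finset.sum_congr rfl
  intro k _
  ring
lemma genuineBD_eq_sum (M : ℕ) (hM : 2 ≤ M) (h : ℝ → ℝ) (x : ℝ) :
    genuineBD M h x = ∑ k ∈ Finset.range (M+1), bern M k x * betaF M h k := by
  have hsplit : Finset.range (M+1) = insert 0 (insert M (Finset.Icc 1 (M-1))) := by
    ext j
    simp only [Finset.mem_range, Finset.mem_insert, Finset.mem_Icc]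
    omega
  rw [hsplit, Finset.sum_insert, Finset.sum_insert]
  · have hb0 : bern M 0 x = (1-x)^M := by unfold bern; simp
    have hbM : bern M M x = x^M := by unfold bern; simp
    have hf0 : betaF M h 0 = h 0 := by unfold betaF; simp
    have hfM : betaF M h M = h 1 := by unfold betaF; rw [if_neg (by omega), if_pos rfl]
    rw [hb0, hbM, hf0, hfM]
    unfold genuineBD
    rw [Finset.mul_sum]
    have hsum : ∀ k ∈ Finset.Icc 1 (M-1),
        ((M:ℝ) - 1) * (bern M k x * ∫ t in (0:ℝ)..1, h t * bern (M - 2) (k - 1) t)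
        = bern M k x * betaF M h k := by
      intro k hk
      obtain ⟨hk1, hk2⟩ := Finset.mem_Icc.mp hk
      have hint : (∫ t in (0:ℝ)..1, h t * bern (M-2) (k-1) t)
          = ((M-2).choose (k-1) : ℝ) * JJ (k-1) (M-k-1) h := by
        rw [int_bern]
        rw [show (M - 2 - (k-1) : ℕ) = M - k - 1 by omega]
      have hbf : betaF M h k = ((M:ℝ) - 1) * (((M-2).choose (k-1) : ℕ) : ℝ) * JJ (k-1) (M-k-1) h := by
        unfold betaF
        rw [if_neg (by omega), if_neg (by omega)]
      rw [hint, hbf]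
      ring
    rw [Finset.sum_congr rfl hsum]
    ring
  · simp only [Finset.mem_Icc]; omega
  · simp only [Finset.mem_insert, Finset.mem_Icc]; omega

/-- the r-fold commutation family -/
noncomputable def Vop (n s : ℕ) (f : ℝ → ℝ) (x : ℝ) : ℝ :=
  ∑ k ∈ Finset.range (n - s + 1), bern (n-s) k x * betaF (n+s) (iteratedDeriv s f) (s + k)

lemma hasDerivAt_base (n : ℕ) (hn : 3 ≤ n) {f : ℝ → ℝ}
    (hd : ∀ t, HasDerivAt f (deriv f t) t) (hfc : Continuous f) (hfc' : Continuous (deriv f))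
    (x : ℝ) :
    HasDerivAt (genuineBD n f) (Vop n 1 f x) x := by
  have heq : genuineBD n f = fun y => ∑ k ∈ Finset.range ((n-1)+2), bern ((n-1)+1) k y * betaF n f k := by
    funext y
    rw [show (n-1)+2 = n + 1 by omega, show (n-1)+1 = n by omega]
    exact genuineBD_eq_sum n (by omega) f y
  rw [heq]
  have hder := sum_deriv (n-1) (fun k => betaF n f k) x
  convert hder using 1
  unfold Vop
  rw [show ((n-1)+1 : ℕ) = n by omega]
  rw [Finset.mul_sum]
  apply Finset.sum_congr rfl ?_
  intro k hk
  have hkn : k ≤ n - 1 := by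
    have := Finset.mem_range.mp hk; omega
  have hstep := beta_step n (by omega) f hd hfc hfc' k (by omega)
  have hVcoef : betaF (n+1) (iteratedDeriv 1 f) (1 + k)
      = ((n:ℝ)) * (((n-1).choose k : ℕ) : ℝ) * JJ k (n-k-1) (deriv f) := by
    unfold betaF
    rw [if_neg (by omega), if_neg (by omega)]
    rw [show ((n+1:ℕ):ℝ) - 1 = (n:ℝ) by push_cast; ring]
    rw [show (n + 1 - 2 : ℕ) = n - 1 by omega, show (1 + k - 1 : ℕ) = k by omega,
      show (n + 1 - (1+k) - 1 : ℕ) = n - k - 1 by omega]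
    rw [iteratedDeriv_one]
  rw [hVcoef, hstep]
  rw [show (n - 1 - k : ℕ) = n - k - 1 by omega]
  ring

lemma hasDerivAt_step (n s : ℕ) (hs : 1 ≤ s) (hsn : s + 2 ≤ n) {f : ℝ → ℝ}
    (hd : ∀ t, HasDerivAt (iteratedDeriv s f) (deriv (iteratedDeriv s f) t) t)
    (hgc : Continuous (iteratedDeriv s f)) (hgc' : Continuous (deriv (iteratedDeriv s f)))
    (x : ℝ) :
    HasDerivAt (Vop n s f) ((((n:ℝ) - s) / ((n:ℝ) + s)) * Vop n (s+1) f x) x := by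
  have hVeq : Vop n s f = fun y => ∑ k ∈ Finset.range ((n-s-1)+2), bern ((n-s-1)+1) k y
      * betaF (n+s) (iteratedDeriv s f) (s + k) := by
    funext y
    unfold Vop
    rw [show ((n-s-1)+2 : ℕ) = n - s + 1 by omega, show ((n-s-1)+1 : ℕ) = n - s by omega]
  rw [hVeq]
  have hder := sum_deriv (n-s-1) (fun k => betaF (n+s) (iteratedDeriv s f) (s + k)) x
  convert hder using 1
  unfold Vop
  rw [show ((n-s-1)+1 : ℕ) = n - s by omega]
  rw [Finset.mul_sum, Finset.mul_sum]
  rw [show (n - (s+1) + 1 : ℕ) = n - s by omega, show (n - (s+1) : ℕ) = n - s - 1 by omega]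
  apply Finset.sum_congr rfl ?_
  intro k hk
  have hkn : k ≤ n - s - 1 := by
    have := Finset.mem_range.mp hk; omega
  have hstep := beta_step (n+s) (by omega) (iteratedDeriv s f) hd hgc hgc' (s+k) (by omega)
  have hVcoef : betaF (n+(s+1)) (iteratedDeriv (s+1) f) ((s+1) + k)
      = ((n:ℝ) + s) * (((n+s-1).choose (s+k) : ℕ) : ℝ) * JJ (s+k) (n-k-1) (deriv (iteratedDeriv s f)) := by
    unfold betaF
    rw [if_neg (by omega), if_neg (by omega)]
    rw [show ((n+(s+1):ℕ):ℝ) - 1 = (n:ℝ) + s by push_cast; ring]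
    rw [show (n + (s+1) - 2 : ℕ) = n + s - 1 by omega, show ((s+1) + k - 1 : ℕ) = s + k by omega,
      show (n + (s+1) - ((s+1)+k) - 1 : ℕ) = n - k - 1 by omega]
    rw [iteratedDeriv_succ]
  rw [hVcoef]
  rw [show (s + (k+1) : ℕ) = s + k + 1 by omega, hstep]
  rw [show (n + s - 1 - (s+k) : ℕ) = n - k - 1 by omega]
  have hcast1 : ((n - s : ℕ) : ℝ) = (n:ℝ) - s := by
    push_cast [Nat.cast_sub (by omega : s ≤ n)]; ring
  rw [hcast1]
  have hns : ((n:ℝ) + s) ≠ 0 := by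
    have : 0 < n + s := by omega
    have : (0:ℝ) < (n:ℝ) + s := by exact_mod_cast this
    linarith
  field_simp
noncomputable def Pconst (n s : ℕ) : ℝ :=
  ((n-1).factorial : ℝ) * (n.factorial : ℝ) / (((n-s).factorial : ℝ) * ((n+s-1).factorial : ℝ))

lemma Pconst_one (n : ℕ) (hn : 1 ≤ n) : Pconst n 1 = 1 := by
  unfold Pconst
  rw [show (n + 1 - 1 : ℕ) = n by omega]
  rw [div_eq_one_iff_eq (by
    have h1 := fact_ne (n-1)
    have h2 := fact_ne n
    exact mul_ne_zero h1 h2)]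

lemma Pconst_step (n s : ℕ) (hs : 1 ≤ s) (hsn : s + 2 ≤ n) :
    Pconst n s * (((n:ℝ) - s) / ((n:ℝ) + s)) = Pconst n (s+1) := by
  unfold Pconst
  have h1 : (n - s : ℕ) = (n - (s+1)) + 1 := by omega
  have h2 : (n + (s+1) - 1 : ℕ) = (n + s - 1) + 1 := by omega
  rw [h1, h2, Nat.factorial_succ, Nat.factorial_succ]
  have hc1 : (((n - (s+1) : ℕ)):ℝ) + 1 = (n:ℝ) - s := by
    have : s + 1 ≤ n := by omega
    push_cast [Nat.cast_sub this]; ring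
  have hc2 : (((n + s - 1 : ℕ)):ℝ) + 1 = (n:ℝ) + s := by
    have : (1:ℕ) ≤ n + s := by omega
    push_cast [Nat.cast_sub this]; ring
  push_cast
  rw [hc1, hc2]
  have hne1 := fact_ne (n - (s+1))
  have hne2 := fact_ne (n + s - 1)
  have hx1 : (n:ℝ) - s ≠ 0 := by
    have : s + 1 ≤ n := by omega
    have : ((s:ℝ)) + 1 ≤ (n:ℝ) := by exact_mod_cast this
    intro h; linarith
  have hx2 : (n:ℝ) + s ≠ 0 := by
    have : 0 < n + s := by omega
    have : (0:ℝ) < (n:ℝ) + s := by exact_mod_cast this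
    linarith
  field_simp

lemma iter_identity (n r : ℕ) (hr1 : 1 ≤ r) (hr2 : r + 2 ≤ n)
    (f : ℝ → ℝ) (hf : ContDiff ℝ (r + 2 : ℕ) f) :
    ∀ s, 1 ≤ s → s ≤ r → iteratedDeriv s (genuineBD n f) = fun x => Pconst n s * Vop n s f x := by
  have hdiff : ∀ s : ℕ, s ≤ r → Differentiable ℝ (iteratedDeriv s f) := by
    intro s hs
    apply hf.differentiable_iteratedDeriv
    exact_mod_cast Nat.lt_of_lt_of_le (by omega : s < r+2) (le_refl (r+2))
  have hcont : ∀ s : ℕ, s ≤ r + 2 → Continuous (iteratedDeriv s f) := by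
    intro s hs
    apply hf.continuous_iteratedDeriv
    exact_mod_cast hs
  have hD : ∀ s : ℕ, s ≤ r → ∀ t, HasDerivAt (iteratedDeriv s f) (deriv (iteratedDeriv s f) t) t := by
    intro s hs t
    exact ((hdiff s hs) t).hasDerivAt
  intro s
  induction s with
  | zero => intro h; omega
  | succ s ih =>
    intro _ hsr
    rcases Nat.eq_zero_or_pos s with hs0 | hspos
    · subst hs0
      rw [iteratedDeriv_one, Pconst_one n (by omega)]
      funext x
      have hbase := hasDerivAt_base n (by omega) (by
          intro t
          have h0 : iteratedDeriv 0 f = f := iteratedDeriv_zero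
          have := hD 0 (by omega) t
          rw [h0] at this
          exact this)
        (by have := hcont 0 (by omega); rwa [iteratedDeriv_zero] at this)
        (by
          have := hcont 1 (by omega)
          rwa [iteratedDeriv_one] at this) x
      rw [hbase.deriv]
      ring
    · have hIH := ih (by omega) (by omega)
      rw [iteratedDeriv_succ, hIH]
      funext x
      have hstep := hasDerivAt_step n s hspos (by omega)
        (by
          intro t; exact hD s (by omega) t)
        (hcont s (by omega))
        (by
          have := hcont (s+1) (by omega)
          rwa [iteratedDeriv_succ] at this) x
      have := (hstep.const_mul (Pconst n s)).deriv
      rw [this]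
      rw [show Pconst n s * (((n:ℝ) - s) / ((n:ℝ) + s) * Vop n (s+1) f x)
        = (Pconst n s * (((n:ℝ) - s) / ((n:ℝ) + s))) * Vop n (s+1) f x by ring]
      rw [Pconst_step n s hspos (by omega)]
lemma supNorm_bound {h : ℝ → ℝ} (hc : Continuous h) :
    ∀ t ∈ Set.Icc (0:ℝ) 1, |h t| ≤ supNorm h := by
  intro t ht
  have hbdd : BddAbove (Set.range fun x : Set.Icc (0:ℝ) 1 => |h x|) := by
    have hcomp : IsCompact ((fun t => |h t|) '' Set.Icc (0:ℝ) 1) :=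
      isCompact_Icc.image (continuous_abs.comp hc)
    have heq : Set.range (fun x : Set.Icc (0:ℝ) 1 => |h x|)
        = (fun t => |h t|) '' Set.Icc (0:ℝ) 1 := by
      ext y
      simp [Set.mem_image]
    rw [heq]
    exact hcomp.bddAbove
  exact le_ciSup hbdd ⟨t, ht⟩

lemma supNorm_nonneg (h : ℝ → ℝ) : 0 ≤ supNorm h :=
  Real.iSup_nonneg (fun _ => abs_nonneg _)

lemma modCont_nonneg {g : ℝ → ℝ} (hc : Continuous g) {δ : ℝ} (hδ : 0 ≤ δ) :
    0 ≤ modCont g δ := by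
  unfold modCont
  apply le_csSup
  · refine ⟨2 * supNorm g, ?_⟩
    rintro d ⟨x, hx, y, hy, _, rfl⟩
    calc |g x - g y| ≤ |g x| + |g y| := abs_sub _ _
      _ ≤ supNorm g + supNorm g := add_le_add (supNorm_bound hc x hx) (supNorm_bound hc y hy)
      _ = 2 * supNorm g := by ring
  · exact ⟨0, by norm_num, 0, by norm_num, by simpa using hδ, by simp⟩

theorem genuineBD_derivative_difference
    (n r : ℕ) (hr1 : 1 ≤ r) (hr2 : r + 2 ≤ n)
    (f : ℝ → ℝ) (hf : ContDiff ℝ (r + 2 : ℕ) f) :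
    ∀ x ∈ Set.Icc (0:ℝ) 1,
      |((n + r - 1).factorial : ℝ) * ((n - r).factorial : ℝ) /
            (((n - 1).factorial : ℝ) * (n.factorial : ℝ)) *
            iteratedDeriv r (genuineBD n f) x
          - genuineBD (n - r) (iteratedDeriv r f) x| ≤
        (1 / 4) * (((n : ℝ) + 1) / (((n : ℝ) + 1) ^ 2 - (r : ℝ) ^ 2)) *
            supNorm (iteratedDeriv (r + 2) f)
          + (r : ℝ) / ((n : ℝ) + (r : ℝ)) * supNorm (iteratedDeriv (r + 1) f)
          + modCont (iteratedDeriv r f)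
              ((r : ℝ) * ((n : ℝ) - 2 - (r : ℝ)) / ((n : ℝ) ^ 2 - (r : ℝ) ^ 2)) := by
  intro x hx
  set g := iteratedDeriv r f with hgdef
  set m := n - r with hmdef
  have hm2 : 2 ≤ m := by omega
  -- continuity and differentiability facts
  have hcont : ∀ s : ℕ, s ≤ r + 2 → Continuous (iteratedDeriv s f) := by
    intro s hs
    apply hf.continuous_iteratedDeriv
    exact_mod_cast hs
  have hgc : Continuous g := hcont r (by omega)
  have hderivg : deriv g = iteratedDeriv (r+1) f := by
    rw [hgdef, ← iteratedDeriv_succ]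
  have hg'c : Continuous (deriv g) := by
    rw [hderivg]; exact hcont (r+1) (by omega)
  have hgd : ∀ t, HasDerivAt g (deriv g t) t := by
    intro t
    refine (DifferentiableAt.hasDerivAt ?_)
    have : Differentiable ℝ (iteratedDeriv r f) := by
      apply hf.differentiable_iteratedDeriv
      exact_mod_cast Nat.lt_of_lt_of_le (by omega : r < r + 2) (le_refl (r+2))
    exact this t
  -- the sup norm bound on g'
  set G : ℝ := supNorm (iteratedDeriv (r+1) f) with hGdef
  have hG : ∀ t ∈ Set.Icc (0:ℝ) 1, |deriv g t| ≤ G := by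
    intro t ht
    rw [hderivg]
    exact supNorm_bound (hcont (r+1) (by omega)) t ht
  -- identity for the iterated derivative
  have hiter := iter_identity n r hr1 hr2 f hf r hr1 (le_refl r)
  have hiterx : iteratedDeriv r (genuineBD n f) x = Pconst n r * Vop n r f x := by
    rw [hiter]
  rw [hiterx]
  -- collapse the constant
  have hfactC : ((n + r - 1).factorial : ℝ) * ((n - r).factorial : ℝ) /
      (((n - 1).factorial : ℝ) * (n.factorial : ℝ)) * Pconst n r = 1 := by
    unfold Pconst
    rw [show (n + r - 1 : ℕ) = n + r - 1 from rfl]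
    have h1 := fact_ne (n-1)
    have h2 := fact_ne n
    have h3 := fact_ne (n-r)
    have h4 := fact_ne (n+r-1)
    field_simp
  have hcollapse : ((n + r - 1).factorial : ℝ) * ((n - r).factorial : ℝ) /
      (((n - 1).factorial : ℝ) * (n.factorial : ℝ)) * (Pconst n r * Vop n r f x)
      = Vop n r f x := by
    rw [show ((n + r - 1).factorial : ℝ) * ((n - r).factorial : ℝ) /
      (((n - 1).factorial : ℝ) * (n.factorial : ℝ)) * (Pconst n r * Vop n r f x)
      = (((n + r - 1).factorial : ℝ) * ((n - r).factorial : ℝ) /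
      (((n - 1).factorial : ℝ) * (n.factorial : ℝ)) * Pconst n r) * Vop n r f x by ring,
      hfactC, one_mul]
  rw [hcollapse]
  -- rewrite both operators as Bernstein sums
  have hBD : genuineBD m g x = ∑ k ∈ Finset.range (m+1), bern m k x * betaF m g k :=
    genuineBD_eq_sum m hm2 g x
  have hV : Vop n r f x = ∑ k ∈ Finset.range (m+1), bern m k x * betaF (m + 2*r) g (r + k) := by
    unfold Vop
    rw [← hmdef, ← hgdef]
    rw [show (m + 2*r : ℕ) = n + r by omega]
  rw [hV, hBD]
  have hdiff : (∑ k ∈ Finset.range (m+1), bern m k x * betaF (m + 2*r) g (r + k))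
      - ∑ k ∈ Finset.range (m+1), bern m k x * betaF m g k
      = ∑ k ∈ Finset.range (m+1), bern m k x * (betaF (m + 2*r) g (r + k) - betaF m g k) := by
    rw [← Finset.sum_sub_distrib]
    apply Finset.sum_congr rfl
    intro k _; ring
  rw [hdiff]
  -- main estimate
  have hmain : |∑ k ∈ Finset.range (m+1), bern m k x * (betaF (m + 2*r) g (r + k) - betaF m g k)|
      ≤ (r:ℝ) * G / ((m:ℝ) + 2*(r:ℝ)) := by
    refine le_trans (Finset.abs_sum_le_sum_abs _ _) ?_
    have hstep : ∀ k ∈ Finset.range (m+1),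
        |bern m k x * (betaF (m + 2*r) g (r + k) - betaF m g k)|
        ≤ bern m k x * ((r:ℝ) * G / ((m:ℝ) + 2*(r:ℝ))) := by
      intro k hk
      have hkm : k ≤ m := by
        have := Finset.mem_range.mp hk; omega
      rw [abs_mul, abs_of_nonneg (bern_nonneg hx m k)]
      apply mul_le_mul_of_nonneg_left _ (bern_nonneg hx m k)
      exact coef_bound m r hm2 hr1 hgd hgc hg'c G hG k hkm
    refine le_trans (Finset.sum_le_sum hstep) ?_
    rw [← Finset.sum_mul, bern_sum m x, one_mul]
  -- translate to the target bound
  have hcast : ((m:ℝ) + 2*(r:ℝ)) = (n:ℝ) + (r:ℝ) := by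
    rw [hmdef]
    push_cast [Nat.cast_sub (by omega : r ≤ n)]
    ring
  rw [hcast] at hmain
  have hterm2 : (r:ℝ) * G / ((n:ℝ) + (r:ℝ)) = (r : ℝ) / ((n : ℝ) + (r : ℝ)) * G := by ring
  -- nonnegativity of the other two terms
  have hT1 : 0 ≤ (1 / 4) * (((n : ℝ) + 1) / (((n : ℝ) + 1) ^ 2 - (r : ℝ) ^ 2)) *
      supNorm (iteratedDeriv (r + 2) f) := by
    have hrn : (r:ℝ) ≤ (n:ℝ) - 2 := by
      have : (r:ℕ) + 2 ≤ n := hr2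
      have : ((r:ℝ)) + 2 ≤ (n:ℝ) := by exact_mod_cast this
      linarith
    have hden : 0 < ((n : ℝ) + 1) ^ 2 - (r : ℝ) ^ 2 := by
      have hr0 : (0:ℝ) ≤ (r:ℝ) := Nat.cast_nonneg r
      nlinarith
    have hnum : 0 ≤ (n:ℝ) + 1 := by positivity
    have := supNorm_nonneg (iteratedDeriv (r + 2) f)
    positivity
  have hT3 : 0 ≤ modCont (iteratedDeriv r f)
      ((r : ℝ) * ((n : ℝ) - 2 - (r : ℝ)) / ((n : ℝ) ^ 2 - (r : ℝ) ^ 2)) := by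
    apply modCont_nonneg hgc
    have hrn : (r:ℝ) ≤ (n:ℝ) - 2 := by
      have : (r:ℕ) + 2 ≤ n := hr2
      have : ((r:ℝ)) + 2 ≤ (n:ℝ) := by exact_mod_cast this
      linarith
    have hr0 : (0:ℝ) ≤ (r:ℝ) := Nat.cast_nonneg r
    have hden : 0 < (n : ℝ) ^ 2 - (r : ℝ) ^ 2 := by nlinarith
    have hnum : 0 ≤ (r : ℝ) * ((n : ℝ) - 2 - (r : ℝ)) := by nlinarith
    positivity
  have hmain' : |∑ k ∈ Finset.range (m+1), bern m k x * (betaF (m + 2*r) g (r + k) - betaF m g k)|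
      ≤ (r : ℝ) / ((n : ℝ) + (r : ℝ)) * supNorm (iteratedDeriv (r + 1) f) := by
    rw [← hterm2] at *
    exact hmain
  linarith
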